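/- For all real numbers ζ, σ, σ₀ with 0 ≤ ζ ≤ σ ≤ σ₀ and σ > 0, one has η(σ, σ₀, ζ) ≥ √(1 − ζ²/σ²). -/

import Mathlib

/-- η(σ, σ₀, ζ) := (1 − σ/σ₀) + √((1 − σ/σ₀)² + (σ/σ₀)² − (ζ/σ₀)²). -/
noncomputable def eta (σ σ₀ ζ : ℝ) : ℝ :=
  (1 - σ / σ₀) + Real.sqrt ((1 - σ / σ₀) ^ 2 + (σ / σ₀) ^ 2 - (ζ / σ₀) ^ 2)

/-- for 0 ≤ ζ ≤ σ ≤ σ₀ with σ > 0, η(σ, σ₀, ζ) ≥ √(1 − ζ²/σ²). -/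
theorem stmt1 {ζ σ σ₀ : ℝ} (h0 : 0 ≤ ζ) (h1 : ζ ≤ σ) (h2 : σ ≤ σ₀) (hσ : 0 < σ) :
    Real.sqrt (1 - ζ ^ 2 / σ ^ 2) ≤ eta σ σ₀ ζ := by
  have hσ₀ : 0 < σ₀ := lt_of_lt_of_le hσ h2
  set s : ℝ := σ / σ₀ with hs
  have hs0 : 0 < s := div_pos hσ hσ₀
  have hs1 : s ≤ 1 := (div_le_one hσ₀).2 h2
  set L : ℝ := Real.sqrt (1 - ζ ^ 2 / σ ^ 2) with hL
  have hL0 : 0 ≤ L := Real.sqrt_nonneg _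
  have ht : ζ ^ 2 / σ ^ 2 ≤ 1 := by
    rw [div_le_one (by positivity)]
    exact pow_le_pow_left₀ h0 h1 2
  have hL1 : L ≤ 1 := by
    have hnn : 0 ≤ ζ ^ 2 / σ ^ 2 := by positivity
    have h := Real.sqrt_le_sqrt (show 1 - ζ ^ 2 / σ ^ 2 ≤ 1 by linarith)
    rwa [Real.sqrt_one] at h
  have hLsq : L ^ 2 = 1 - ζ ^ 2 / σ ^ 2 := Real.sq_sqrt (by linarith)
  have key : s * L ≤ Real.sqrt ((1 - s) ^ 2 + s ^ 2 - (ζ / σ₀) ^ 2) := by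
    have hz : (ζ / σ₀) ^ 2 = s ^ 2 * (ζ ^ 2 / σ ^ 2) := by
      field_simp [hs]
      rw [hs]; field_simp
    have hrad : 0 ≤ (1 - s) ^ 2 + s ^ 2 - (ζ / σ₀) ^ 2 := by
      rw [hz]; nlinarith [sq_nonneg (1 - s), sq_nonneg s]
    apply (Real.le_sqrt (by positivity) hrad).2
    have : (s * L) ^ 2 = s ^ 2 - (ζ / σ₀) ^ 2 := by
      rw [mul_pow, hLsq, hz]; ring
    nlinarith [sq_nonneg (1 - s)]
  have h2' : (1 - s) * L ≤ 1 - s := by nlinarith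
  calc L = (1 - s) * L + s * L := by ring
    _ ≤ (1 - s) + Real.sqrt ((1 - s) ^ 2 + s ^ 2 - (ζ / σ₀) ^ 2) := by
        exact add_le_add h2' key
    _ = eta σ σ₀ ζ := rfl
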